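/- Let A, B be disjoint finite vertex sets and H ⊆ A × B a bipartite graph with |E(H)| ≥ |A||B|/K, and let 0 < ε < 1. Then there exists U ⊆ A with |U| ≥ |A|/(2K) such that at least a (1−ε)-fraction of the ordered pairs of vertices (u,u') ∈ U × U have at least ε|B|/(2K²) common neighbors in B. -/
import Mathlib


open scoped Classical

open Finset

private lemma drc_key {V : Type*} [DecidableEq V] (A B : Finset V) (H : Finset (V × V))
    (P : V × V → Prop) [DecidablePred P] :
    ∑ b ∈ B, (((A.filter fun a => (a, b) ∈ H) ×ˢ (A.filter fun a => (a, b) ∈ H)).filter P).card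
      = ∑ p ∈ (A ×ˢ A).filter P,
          (B.filter fun b => (p.1, b) ∈ H ∧ (p.2, b) ∈ H).card := by
  have h2 : ∀ b, (((A.filter fun a => (a, b) ∈ H) ×ˢ (A.filter fun a => (a, b) ∈ H)).filter P).card
      = ∑ p ∈ A ×ˢ A, if P p ∧ ((p.1, b) ∈ H ∧ (p.2, b) ∈ H) then 1 else 0 := by
    intro b
    rw [← card_filter]
    congr 1
    ext p
    simp only [mem_filter, mem_product]
    tauto
  simp_rw [h2]
  rw [Finset.sum_comm, Finset.sum_filter]
  refine Finset.sum_congr rfl fun p _ => ?_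
  by_cases hp : P p
  · simp only [hp, true_and, if_true, card_filter]
  · simp [hp]

private lemma drc_edges {V : Type*} [DecidableEq V] (A B : Finset V) (H : Finset (V × V))
    (hH : H ⊆ A ×ˢ B) :
    ∑ b ∈ B, (A.filter fun a => (a, b) ∈ H).card = H.card := by
  have h1 : H = (A ×ˢ B).filter (fun p => p ∈ H) := by
    ext p; simp only [mem_filter]; exact ⟨fun h => ⟨hH h, h⟩, fun h => h.2⟩
  conv_rhs => rw [h1, card_filter, Finset.sum_product_right]
  refine Finset.sum_congr rfl fun b hb => ?_
  rw [card_filter]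

set_option maxHeartbeats 1000000

/-- **Dependent random choice.**  If `H ⊆ A × B` is a bipartite graph with
`|E(H)| ≥ |A||B|/K` and `0 < ε < 1`, then there is `U ⊆ A` with `|U| ≥ |A|/(2K)`
such that at least a `(1 - ε)`-fraction of ordered pairs `(u, u') ∈ U × U` have
at least `ε|B|/(2K²)` common neighbors in `B`. -/
theorem dependent_random_choice {V : Type*} [DecidableEq V]
    (A B : Finset V) (hAB : Disjoint A B)
    (K ε : ℝ) (hK : 1 ≤ K) (hε : 0 < ε) (hε1 : ε < 1)
    (H : Finset (V × V)) (hH : H ⊆ A ×ˢ B)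
    (hE : (A.card : ℝ) * B.card / K ≤ H.card) :
    ∃ U ⊆ A, (A.card : ℝ) / (2 * K) ≤ U.card ∧
      (1 - ε) * (U.card : ℝ) ^ 2 ≤
        (((U ×ˢ U).filter fun p =>
          ε * B.card / (2 * K ^ 2) ≤
            ((B.filter fun b => (p.1, b) ∈ H ∧ (p.2, b) ∈ H).card : ℝ)).card : ℝ) := by
  classical
  have hK0 : (0:ℝ) < K := lt_of_lt_of_le one_pos hK
  have hA0 : (0:ℝ) ≤ (A.card : ℝ) := Nat.cast_nonneg _
  by_cases hB0 : B = ∅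
  · refine ⟨A, subset_rfl, ?_, ?_⟩
    · rw [div_le_iff₀ (by linarith)]
      nlinarith
    · have hfil : ((A ×ˢ A).filter fun p =>
          ε * B.card / (2 * K ^ 2) ≤
            ((B.filter fun b => (p.1, b) ∈ H ∧ (p.2, b) ∈ H).card : ℝ)) = A ×ˢ A := by
        refine Finset.filter_true_of_mem fun p _ => ?_
        subst hB0; simp
      rw [hfil, Finset.card_product, Nat.cast_mul, ← sq]
      nlinarith [sq_nonneg ((A.card : ℝ))]
  have hBne : B.Nonempty := Finset.nonempty_iff_ne_empty.2 hB0
  have hBpos : (0:ℝ) < (B.card : ℝ) := by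
    exact_mod_cast Nat.cast_pos.2 (Finset.card_pos.2 hBne)
  set m : ℝ := ε * B.card / (2 * K ^ 2) with hm
  have hm0 : 0 ≤ m := by positivity
  -- sum of degrees
  have h1 : (∑ b ∈ B, ((A.filter fun a => (a, b) ∈ H).card : ℝ)) = H.card := by
    rw [← Nat.cast_sum, drc_edges A B H hH]
  -- sum of squares
  have h2 : (∑ b ∈ B, ((A.filter fun a => (a, b) ∈ H).card : ℝ) ^ 2)
      = ∑ p ∈ A ×ˢ A, ((B.filter fun b => (p.1, b) ∈ H ∧ (p.2, b) ∈ H).card : ℝ) := by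
    have h := drc_key A B H (fun _ => True)
    simp only [Finset.filter_true, Finset.card_product] at h
    have h' := congrArg (Nat.cast : ℕ → ℝ) h
    push_cast at h'
    simpa [sq] using h'
  -- sum of bad pair counts
  have h3 : (∑ b ∈ B, ((((A.filter fun a => (a, b) ∈ H) ×ˢ (A.filter fun a => (a, b) ∈ H)).filter
        fun p => ((B.filter fun c => (p.1, c) ∈ H ∧ (p.2, c) ∈ H).card : ℝ) < m).card : ℝ))
      ≤ (A.card : ℝ) ^ 2 * m := by
    rw [← Nat.cast_sum, drc_key A B H
      (fun p => ((B.filter fun c => (p.1, c) ∈ H ∧ (p.2, c) ∈ H).card : ℝ) < m)]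
    push_cast
    calc (∑ p ∈ (A ×ˢ A).filter (fun p =>
            ((B.filter fun c => (p.1, c) ∈ H ∧ (p.2, c) ∈ H).card : ℝ) < m),
            ((B.filter fun c => (p.1, c) ∈ H ∧ (p.2, c) ∈ H).card : ℝ))
        ≤ ∑ _p ∈ (A ×ˢ A).filter (fun p =>
            ((B.filter fun c => (p.1, c) ∈ H ∧ (p.2, c) ∈ H).card : ℝ) < m), m := by
          refine Finset.sum_le_sum fun p hp => ?_
          exact le_of_lt (Finset.mem_filter.mp hp).2
      _ ≤ (A.card : ℝ) ^ 2 * m := by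
          rw [Finset.sum_const, nsmul_eq_mul]
          have hcard : (((A ×ˢ A).filter (fun p =>
              ((B.filter fun c => (p.1, c) ∈ H ∧ (p.2, c) ∈ H).card : ℝ) < m)).card : ℝ)
              ≤ (A.card : ℝ) ^ 2 := by
            have := Finset.card_le_card (Finset.filter_subset (fun p =>
              ((B.filter fun c => (p.1, c) ∈ H ∧ (p.2, c) ∈ H).card : ℝ) < m) (A ×ˢ A))
            rw [Finset.card_product] at this
            push_cast
            exact_mod_cast le_trans (Nat.cast_le.mpr this) (by push_cast; nlinarith)
          exact mul_le_mul_of_nonneg_right hcard hm0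
  -- Cauchy–Schwarz
  have hCS : ((H.card : ℝ)) ^ 2 ≤ (B.card : ℝ) * ∑ b ∈ B, ((A.filter fun a => (a, b) ∈ H).card : ℝ) ^ 2 := by
    rw [← h1]
    exact_mod_cast sq_sum_le_card_mul_sum_sq
  -- lower bound on sum of squares
  have hS : (A.card : ℝ) ^ 2 * B.card / K ^ 2
      ≤ ∑ b ∈ B, ((A.filter fun a => (a, b) ∈ H).card : ℝ) ^ 2 := by
    have hE' : (A.card : ℝ) * B.card ≤ K * H.card := by
      rw [div_le_iff₀ hK0] at hE; linarith
    rw [div_le_iff₀ (by positivity)]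
    have hABn : (0:ℝ) ≤ (A.card : ℝ) * B.card := by positivity
    have hKH : (0:ℝ) ≤ K * H.card := le_trans hABn hE'
    have t1 : ((A.card : ℝ) * B.card) ^ 2 ≤ (K * H.card) ^ 2 := by
      exact pow_le_pow_left₀ hABn hE' 2
    have t2 : K ^ 2 * ((H.card : ℝ)) ^ 2 ≤ K ^ 2 * ((B.card : ℝ) * ∑ b ∈ B, ((A.filter fun a => (a, b) ∈ H).card : ℝ) ^ 2) :=
      mul_le_mul_of_nonneg_left hCS (sq_nonneg K)
    nlinarith [t1, t2, hBpos]
  -- average argument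
  have hexists : ∃ b ∈ B, (A.card : ℝ) ^ 2 / (2 * K ^ 2)
      ≤ ((A.filter fun a => (a, b) ∈ H).card : ℝ) ^ 2
        - ((((A.filter fun a => (a, b) ∈ H) ×ˢ (A.filter fun a => (a, b) ∈ H)).filter
            fun p => ((B.filter fun c => (p.1, c) ∈ H ∧ (p.2, c) ∈ H).card : ℝ) < m).card : ℝ) / ε := by
    refine Finset.exists_le_of_sum_le hBne ?_
    rw [Finset.sum_const, nsmul_eq_mul]
    have expand : ∑ b ∈ B, (((A.filter fun a => (a, b) ∈ H).card : ℝ) ^ 2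
        - ((((A.filter fun a => (a, b) ∈ H) ×ˢ (A.filter fun a => (a, b) ∈ H)).filter
            fun p => ((B.filter fun c => (p.1, c) ∈ H ∧ (p.2, c) ∈ H).card : ℝ) < m).card : ℝ) / ε)
        = (∑ b ∈ B, ((A.filter fun a => (a, b) ∈ H).card : ℝ) ^ 2)
          - (∑ b ∈ B, ((((A.filter fun a => (a, b) ∈ H) ×ˢ (A.filter fun a => (a, b) ∈ H)).filter
            fun p => ((B.filter fun c => (p.1, c) ∈ H ∧ (p.2, c) ∈ H).card : ℝ) < m).card : ℝ)) / ε := by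
      rw [Finset.sum_sub_distrib, Finset.sum_div]
    rw [expand]
    have hbad : (∑ b ∈ B, ((((A.filter fun a => (a, b) ∈ H) ×ˢ (A.filter fun a => (a, b) ∈ H)).filter
            fun p => ((B.filter fun c => (p.1, c) ∈ H ∧ (p.2, c) ∈ H).card : ℝ) < m).card : ℝ)) / ε
        ≤ (A.card : ℝ) ^ 2 * B.card / (2 * K ^ 2) := by
      rw [div_le_iff₀ hε]
      calc _ ≤ (A.card : ℝ) ^ 2 * m := h3
        _ = (A.card : ℝ) ^ 2 * B.card / (2 * K ^ 2) * ε := by rw [hm]; ring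
    have : (B.card : ℝ) * ((A.card : ℝ) ^ 2 / (2 * K ^ 2))
        = (A.card : ℝ) ^ 2 * B.card / K ^ 2 - (A.card : ℝ) ^ 2 * B.card / (2 * K ^ 2) := by
      field_simp; ring
    rw [this]
    linarith [hS, hbad]
  obtain ⟨b, hbB, hgb⟩ := hexists
  refine ⟨A.filter fun a => (a, b) ∈ H, Finset.filter_subset _ _, ?_, ?_⟩
  · -- size bound
    set u : ℝ := ((A.filter fun a => (a, b) ∈ H).card : ℝ) with hu
    have hu0 : 0 ≤ u := Nat.cast_nonneg _
    have hbadnn : 0 ≤ ((((A.filter fun a => (a, b) ∈ H) ×ˢ (A.filter fun a => (a, b) ∈ H)).filter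
            fun p => ((B.filter fun c => (p.1, c) ∈ H ∧ (p.2, c) ∈ H).card : ℝ) < m).card : ℝ) / ε := by
      positivity
    have hsq : (A.card : ℝ) ^ 2 / (2 * K ^ 2) ≤ u ^ 2 := by linarith
    have hsq' : (A.card : ℝ) ^ 2 ≤ 2 * K ^ 2 * u ^ 2 := by
      rw [div_le_iff₀ (by positivity)] at hsq; linarith
    rw [div_le_iff₀ (by positivity)]
    have h4 : (A.card : ℝ) ^ 2 ≤ (u * (2 * K)) ^ 2 := by nlinarith [hsq', sq_nonneg (K * u)]
    exact (pow_le_pow_iff_left₀ hA0 (by positivity) two_ne_zero).mp h4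
  · -- good pair bound
    have hcompl :
        ((((A.filter fun a => (a, b) ∈ H) ×ˢ (A.filter fun a => (a, b) ∈ H)).filter
          fun p => m ≤ ((B.filter fun c => (p.1, c) ∈ H ∧ (p.2, c) ∈ H).card : ℝ)).card : ℝ)
        = ((A.filter fun a => (a, b) ∈ H).card : ℝ) ^ 2
          - ((((A.filter fun a => (a, b) ∈ H) ×ˢ (A.filter fun a => (a, b) ∈ H)).filter
            fun p => ((B.filter fun c => (p.1, c) ∈ H ∧ (p.2, c) ∈ H).card : ℝ) < m).card : ℝ) := by
      have hpm := Finset.card_filter_add_card_filter_not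
        (s := (A.filter fun a => (a, b) ∈ H) ×ˢ (A.filter fun a => (a, b) ∈ H))
        (fun p => m ≤ ((B.filter fun c => (p.1, c) ∈ H ∧ (p.2, c) ∈ H).card : ℝ))
      have hnot : (((A.filter fun a => (a, b) ∈ H) ×ˢ (A.filter fun a => (a, b) ∈ H)).filter
            fun p => ¬ m ≤ ((B.filter fun c => (p.1, c) ∈ H ∧ (p.2, c) ∈ H).card : ℝ))
          = (((A.filter fun a => (a, b) ∈ H) ×ˢ (A.filter fun a => (a, b) ∈ H)).filter
            fun p => ((B.filter fun c => (p.1, c) ∈ H ∧ (p.2, c) ∈ H).card : ℝ) < m) := by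
        refine Finset.filter_congr fun p _ => ?_
        simp [not_le]
      rw [hnot] at hpm
      have hpm' := congrArg (Nat.cast : ℕ → ℝ) hpm
      push_cast [Finset.card_product] at hpm'
      rw [sq]
      linarith [hpm']
    have hgb' :
        ((((A.filter fun a => (a, b) ∈ H) ×ˢ (A.filter fun a => (a, b) ∈ H)).filter
            fun p => ((B.filter fun c => (p.1, c) ∈ H ∧ (p.2, c) ∈ H).card : ℝ) < m).card : ℝ)
        ≤ ε * ((A.filter fun a => (a, b) ∈ H).card : ℝ) ^ 2 := by
      have h6 : (0:ℝ) ≤ (A.card : ℝ) ^ 2 / (2 * K ^ 2) := by positivity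
      have h5 :
          ((((A.filter fun a => (a, b) ∈ H) ×ˢ (A.filter fun a => (a, b) ∈ H)).filter
            fun p => ((B.filter fun c => (p.1, c) ∈ H ∧ (p.2, c) ∈ H).card : ℝ) < m).card : ℝ) / ε
          ≤ ((A.filter fun a => (a, b) ∈ H).card : ℝ) ^ 2 := by
        linarith [hgb]
      rw [div_le_iff₀ hε] at h5
      nlinarith [h5]
    linarith [hcompl, hgb']
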